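/- For all nonzero vectors a, b in H, the function f : [0,1] → ℝ defined by f(q) = ω_q(a⊗b) attains its maximum value uniquely at q₀ = |⟨a,b⟩|/(‖a‖·‖b‖), with f(q₀) = ‖a‖·‖b‖; that is, f(q₀) = ‖a‖·‖b‖ and f(q) < ‖a‖·‖b‖ for every q ∈ [0,1] with q ≠ q₀. -/

import Mathlib

open scoped ComplexInnerProductSpace

/-- The rank-one operator `a ⊗ b` on a complex Hilbert space, acting by
`(a ⊗ b) x = ⟨x, a⟩ · b` (i.e. `x ↦ ⟪a, x⟫ • b` in Mathlib's convention, where the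
inner product is conjugate-linear in the first slot). -/
noncomputable def rankOne {H : Type*} [NormedAddCommGroup H] [InnerProductSpace ℂ H]
    (a b : H) : H →L[ℂ] H :=
  (innerSL ℂ a).smulRight b

/-- The `q`-numerical radius `ω_q(A) = sup { |⟨Ax, y⟩| : ‖x‖ = ‖y‖ = 1, ⟨x, y⟩ = q }`. -/
noncomputable def qRad {H : Type*} [NormedAddCommGroup H] [InnerProductSpace ℂ H]
    (q : ℝ) (A : H →L[ℂ] H) : ℝ :=
  sSup {r : ℝ | ∃ x y : H, ‖x‖ = 1 ∧ ‖y‖ = 1 ∧ ⟪x, y⟫ = (q : ℂ) ∧ r = ‖⟪A x, y⟫‖}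

section Aux
variable {H : Type*} [NormedAddCommGroup H] [InnerProductSpace ℂ H]

lemma norm_inner_le_one {u x : H} (hu : ‖u‖ = 1) (hx : ‖x‖ = 1) : ‖⟪u, x⟫‖ ≤ 1 := by
  simpa [hu, hx] using norm_inner_le_norm (𝕜 := ℂ) u x

lemma neg_one_le_norm (z : ℂ) : (-1 : ℝ) ≤ ‖z‖ := le_trans (by norm_num) (norm_nonneg _)

lemma inner_perp_decomp {x : H} (hx : ‖x‖ = 1) (u v : H) :
    ⟪u - ⟪x, u⟫ • x, v - ⟪x, v⟫ • x⟫ = ⟪u, v⟫ - ⟪u, x⟫ * ⟪x, v⟫ := by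
  have hxx : ⟪x, x⟫ = (1 : ℂ) := by
    rw [inner_self_eq_norm_sq_to_K, hx]; norm_num
  simp only [inner_sub_left, inner_sub_right, inner_smul_left, inner_smul_right, hxx,
    inner_conj_symm]
  ring

lemma norm_perp {x u : H} (hx : ‖x‖ = 1) (hu : ‖u‖ = 1) :
    ‖u - ⟪x, u⟫ • x‖ = Real.sqrt (1 - ‖⟪u, x⟫‖ ^ 2) := by
  have h := inner_perp_decomp hx u u
  have huu : ⟪u, u⟫ = (1 : ℂ) := by rw [inner_self_eq_norm_sq_to_K, hu]; norm_num
  have hz : ⟪x, u⟫ = (starRingEnd ℂ) ⟪u, x⟫ := (inner_conj_symm x u).symm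
  have h2 : ⟪u, x⟫ * ⟪x, u⟫ = ((‖⟪u, x⟫‖ ^ 2 : ℝ) : ℂ) := by
    rw [hz, Complex.mul_conj, Complex.normSq_eq_norm_sq]
  rw [huu, h2] at h
  rw [norm_eq_sqrt_re_inner (𝕜 := ℂ), h]
  norm_num [← Complex.ofReal_pow]

/-- Triangle inequality for the Fubini–Study-type angle. -/
lemma arccos_triangle {u x v : H} (hu : ‖u‖ = 1) (hx : ‖x‖ = 1) (hv : ‖v‖ = 1) :
    Real.arccos ‖⟪u, v⟫‖ ≤ Real.arccos ‖⟪u, x⟫‖ + Real.arccos ‖⟪x, v⟫‖ := by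
  set α := Real.arccos ‖⟪u, x⟫‖ with hα
  set β := Real.arccos ‖⟪x, v⟫‖ with hβ
  have hux : ‖⟪u, x⟫‖ ≤ 1 := norm_inner_le_one hu hx
  have hxv : ‖⟪x, v⟫‖ ≤ 1 := norm_inner_le_one hx hv
  have hcα : Real.cos α = ‖⟪u, x⟫‖ := Real.cos_arccos (neg_one_le_norm _) hux
  have hcβ : Real.cos β = ‖⟪x, v⟫‖ := Real.cos_arccos (neg_one_le_norm _) hxv
  have hsα : Real.sin α = Real.sqrt (1 - ‖⟪u, x⟫‖ ^ 2) := Real.sin_arccos _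
  have hsβ : Real.sin β = Real.sqrt (1 - ‖⟪x, v⟫‖ ^ 2) := Real.sin_arccos _
  have hdecomp : ⟪u, v⟫ = ⟪u, x⟫ * ⟪x, v⟫ + ⟪u - ⟪x, u⟫ • x, v - ⟪x, v⟫ • x⟫ := by
    rw [inner_perp_decomp hx u v]; ring
  have e1 : ‖u - ⟪x, u⟫ • x‖ = Real.sin α := by rw [hsα, norm_perp hx hu]
  have e2 : ‖v - ⟪x, v⟫ • x‖ = Real.sin β := by
    rw [hsβ, norm_perp hx hv, norm_inner_symm (𝕜 := ℂ)]
  have hkey : Real.cos (α + β) ≤ ‖⟪u, v⟫‖ := by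
    have h1 : ‖⟪u - ⟪x, u⟫ • x, v - ⟪x, v⟫ • x⟫‖ ≤ Real.sin α * Real.sin β := by
      rw [← e1, ← e2]
      exact norm_inner_le_norm (𝕜 := ℂ) _ _
    set p := ⟪u, x⟫ * ⟪x, v⟫
    set w := ⟪u - ⟪x, u⟫ • x, v - ⟪x, v⟫ • x⟫
    have t1 : ‖p‖ ≤ ‖p + w‖ + ‖w‖ := by
      simpa using norm_add_le (p + w) (-w)
    have h3 : ‖p‖ = ‖⟪u, x⟫‖ * ‖⟪x, v⟫‖ := norm_mul _ _
    rw [hdecomp, Real.cos_add, hcα, hcβ]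
    linarith
  by_contra hcon
  push_neg at hcon
  have h0 : 0 ≤ α + β := add_nonneg (Real.arccos_nonneg _) (Real.arccos_nonneg _)
  have hπ : Real.arccos ‖⟪u, v⟫‖ ≤ Real.pi := Real.arccos_le_pi _
  have hlt := Real.cos_lt_cos_of_nonneg_of_le_pi h0 hπ hcon
  rw [Real.cos_arccos (neg_one_le_norm _) (norm_inner_le_one hu hv)] at hlt
  linarith

end Aux

section Aux2
variable {H : Type*} [NormedAddCommGroup H] [InnerProductSpace ℂ H]

/-- Key bound: product of overlaps is controlled by the angle difference. -/
lemma key_bound {x y u v : H} (hx : ‖x‖ = 1) (hy : ‖y‖ = 1) (hu : ‖u‖ = 1) (hv : ‖v‖ = 1)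
    {q : ℝ} (hq0 : 0 ≤ q) (hxy : ⟪x, y⟫ = (q : ℂ)) :
    ‖⟪x, u⟫‖ * ‖⟪v, y⟫‖ ≤
      (1 + Real.cos (Real.arccos q - Real.arccos ‖⟪u, v⟫‖)) / 2 := by
  set α := Real.arccos ‖⟪x, u⟫‖ with hα
  set β := Real.arccos ‖⟪v, y⟫‖ with hβ
  set θ := Real.arccos q with hθ
  set φ := Real.arccos ‖⟪u, v⟫‖ with hφ
  have hnxy : ‖⟪x, y⟫‖ = q := by rw [hxy]; simpa using abs_of_nonneg hq0
  have hxu : ‖⟪x, u⟫‖ ≤ 1 := norm_inner_le_one hx hu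
  have hvy : ‖⟪v, y⟫‖ ≤ 1 := norm_inner_le_one hv hy
  have hcα : Real.cos α = ‖⟪x, u⟫‖ := Real.cos_arccos (neg_one_le_norm _) hxu
  have hcβ : Real.cos β = ‖⟪v, y⟫‖ := Real.cos_arccos (neg_one_le_norm _) hvy
  -- triangle inequalities
  have t1 : φ ≤ α + θ + β := by
    have h1 : Real.arccos ‖⟪u, v⟫‖ ≤ Real.arccos ‖⟪u, x⟫‖ + Real.arccos ‖⟪x, v⟫‖ :=
      arccos_triangle hu hx hv
    have h2 : Real.arccos ‖⟪x, v⟫‖ ≤ Real.arccos ‖⟪x, y⟫‖ + Real.arccos ‖⟪y, v⟫‖ :=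
      arccos_triangle hx hy hv
    rw [norm_inner_symm (𝕜 := ℂ) u x, norm_inner_symm (𝕜 := ℂ) y v, hnxy] at *
    linarith
  have t2 : θ ≤ α + φ + β := by
    have h1 : Real.arccos ‖⟪x, y⟫‖ ≤ Real.arccos ‖⟪x, u⟫‖ + Real.arccos ‖⟪u, y⟫‖ :=
      arccos_triangle hx hu hy
    have h2 : Real.arccos ‖⟪u, y⟫‖ ≤ Real.arccos ‖⟪u, v⟫‖ + Real.arccos ‖⟪v, y⟫‖ :=
      arccos_triangle hu hv hy
    rw [hnxy] at h1
    linarith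
  have hα2 : α ≤ Real.pi / 2 := Real.arccos_le_pi_div_two.2 (norm_nonneg _)
  have hβ2 : β ≤ Real.pi / 2 := Real.arccos_le_pi_div_two.2 (norm_nonneg _)
  have h0 : 0 ≤ |θ - φ| := abs_nonneg _
  have hle : |θ - φ| ≤ α + β := abs_sub_le_iff.2 ⟨by linarith, by linarith⟩
  have hπ : α + β ≤ Real.pi := by linarith
  have hcc : Real.cos (α + β) ≤ Real.cos (θ - φ) := by
    rw [← Real.cos_abs (θ - φ)]
    exact Real.cos_le_cos_of_nonneg_of_le_pi h0 hπ hle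
  have hprod : Real.cos α * Real.cos β = (Real.cos (α + β) + Real.cos (α - β)) / 2 := by
    rw [Real.cos_add, Real.cos_sub]; ring
  have hcab : Real.cos (α - β) ≤ 1 := Real.cos_le_one _
  rw [← hcα, ← hcβ, hprod]
  linarith

end Aux2


section Aux3
variable {H : Type*} [NormedAddCommGroup H] [InnerProductSpace ℂ H]

lemma inner_rankOne (a b x y : H) : ⟪(rankOne a b) x, y⟫ = ⟪x, a⟫ * ⟪b, y⟫ := by
  simp [rankOne, inner_smul_left, inner_conj_symm, mul_comm]

lemma norm_inner_self' (x : H) : ‖⟪x, x⟫‖ = ‖x‖ * ‖x‖ := by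
  rw [← inner_self_re_eq_norm, inner_self_eq_norm_mul_norm]

lemma norm_inner_rankOne (a b x y : H) :
    ‖⟪(rankOne a b) x, y⟫‖ = ‖⟪x, a⟫‖ * ‖⟪b, y⟫‖ := by
  rw [inner_rankOne, norm_mul]

end Aux3

/-- The function `q ↦ ω_q(a ⊗ b)` attains its maximum value `‖a‖ · ‖b‖` on `[0, 1]`
uniquely at `q₀ = |⟨a, b⟩| / (‖a‖ · ‖b‖)`. -/
theorem stmt9 {H : Type*} [NormedAddCommGroup H] [InnerProductSpace ℂ H] [CompleteSpace H]
    (hdim : 2 ≤ Module.rank ℂ H) (a b : H) (ha : a ≠ 0) (hb : b ≠ 0) :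
    qRad (‖⟪a, b⟫‖ / (‖a‖ * ‖b‖)) (rankOne a b) = ‖a‖ * ‖b‖ ∧
      ∀ q ∈ Set.Icc (0 : ℝ) 1, q ≠ ‖⟪a, b⟫‖ / (‖a‖ * ‖b‖) →
        qRad q (rankOne a b) < ‖a‖ * ‖b‖ := by
  have hna : (0 : ℝ) < ‖a‖ := norm_pos_iff.2 ha
  have hnb : (0 : ℝ) < ‖b‖ := norm_pos_iff.2 hb
  have hab : (0 : ℝ) < ‖a‖ * ‖b‖ := mul_pos hna hnb
  set c : ℂ := ⟪a, b⟫ with hc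
  set q₀ : ℝ := ‖c‖ / (‖a‖ * ‖b‖) with hq₀
  set u : H := ((‖a‖⁻¹ : ℝ) : ℂ) • a with hu_def
  set v : H := ((‖b‖⁻¹ : ℝ) : ℂ) • b with hv_def
  have hu : ‖u‖ = 1 := by
    rw [hu_def, norm_smul, Complex.norm_real, Real.norm_eq_abs, abs_of_nonneg (by positivity),
      inv_mul_cancel₀ hna.ne']
  have hv : ‖v‖ = 1 := by
    rw [hv_def, norm_smul, Complex.norm_real, Real.norm_eq_abs, abs_of_nonneg (by positivity),
      inv_mul_cancel₀ hnb.ne']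
  have huv : ⟪u, v⟫ = ((‖a‖⁻¹ : ℝ) : ℂ) * ((‖b‖⁻¹ : ℝ) : ℂ) * c := by
    rw [hu_def, hv_def, inner_smul_left, inner_smul_right, Complex.conj_ofReal]
    ring
  have hnuv : ‖⟪u, v⟫‖ = q₀ := by
    rw [huv, norm_mul, norm_mul, Complex.norm_real, Complex.norm_real, Real.norm_eq_abs,
      Real.norm_eq_abs, abs_of_nonneg (by positivity : (0:ℝ) ≤ ‖a‖⁻¹),
      abs_of_nonneg (by positivity : (0:ℝ) ≤ ‖b‖⁻¹), hq₀]
    field_simp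
  have hq₀0 : 0 ≤ q₀ := by positivity
  have hq₀1 : q₀ ≤ 1 := by rw [← hnuv]; exact norm_inner_le_one hu hv
  have ub : ∀ q : ℝ, ∀ r ∈ {r : ℝ | ∃ x y : H, ‖x‖ = 1 ∧ ‖y‖ = 1 ∧ ⟪x, y⟫ = (q : ℂ) ∧
      r = ‖⟪(rankOne a b) x, y⟫‖}, r ≤ ‖a‖ * ‖b‖ := by
    rintro q r ⟨x, y, hx, hy, hxy, rfl⟩
    rw [norm_inner_rankOne]
    calc ‖⟪x, a⟫‖ * ‖⟪b, y⟫‖ ≤ (‖x‖ * ‖a‖) * (‖b‖ * ‖y‖) :=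
          mul_le_mul (norm_inner_le_norm _ _) (norm_inner_le_norm _ _) (norm_nonneg _)
            (by positivity)
      _ = ‖a‖ * ‖b‖ := by rw [hx, hy]; ring
  constructor
  · -- equality at q₀
    set α : ℂ := if c = 0 then 1 else c / ‖c‖ with hα_def
    have hαn : ‖α‖ = 1 := by
      rw [hα_def]
      split_ifs with h
      · simp
      · rw [norm_div, Complex.norm_real, Real.norm_eq_abs, abs_of_nonneg (norm_nonneg _),
          div_self (norm_ne_zero_iff.2 h)]
    have hαc : (starRingEnd ℂ) α * c = ((‖c‖ : ℝ) : ℂ) := by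
      rw [hα_def]
      split_ifs with h
      · simp [h]
      · have hcn : ((‖c‖ : ℝ) : ℂ) ≠ 0 := by
          simpa using norm_ne_zero_iff.2 h
        have hcc : (starRingEnd ℂ) c * c = ((‖c‖ : ℝ) : ℂ) ^ 2 := by
          rw [mul_comm, Complex.mul_conj, Complex.normSq_eq_norm_sq]
          push_cast
          ring
        calc (starRingEnd ℂ) (c / (‖c‖ : ℝ)) * c = ((starRingEnd ℂ) c * c) / (‖c‖ : ℝ) := by
              rw [map_div₀, Complex.conj_ofReal]; ring
          _ = ((‖c‖ : ℝ) : ℂ) ^ 2 / ((‖c‖ : ℝ) : ℂ) := by rw [hcc]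
          _ = ((‖c‖ : ℝ) : ℂ) := by rw [sq, mul_div_assoc, div_self hcn, mul_one]
    set x : H := α • u with hx_def
    have hx : ‖x‖ = 1 := by rw [hx_def, norm_smul, hαn, hu, mul_one]
    have hxy : ⟪x, v⟫ = ((q₀ : ℝ) : ℂ) := by
      rw [hx_def, inner_smul_left, huv, hq₀]
      rw [show (starRingEnd ℂ) α * (((‖a‖⁻¹ : ℝ) : ℂ) * ((‖b‖⁻¹ : ℝ) : ℂ) * c)
          = ((‖a‖⁻¹ : ℝ) : ℂ) * ((‖b‖⁻¹ : ℝ) : ℂ) * ((starRingEnd ℂ) α * c) by ring, hαc]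
      push_cast
      field_simp
    have hval : ‖⟪(rankOne a b) x, v⟫‖ = ‖a‖ * ‖b‖ := by
      rw [norm_inner_rankOne, hx_def, inner_smul_left, hu_def, inner_smul_left, hv_def,
        inner_smul_right]
      simp only [norm_mul, RCLike.norm_conj, hαn, Complex.norm_real, norm_inner_self',
        Real.norm_eq_abs, abs_of_nonneg (inv_nonneg.2 hna.le), abs_of_nonneg (inv_nonneg.2 hnb.le)]
      field_simp
    have hmem : (‖a‖ * ‖b‖) ∈ {r : ℝ | ∃ x y : H, ‖x‖ = 1 ∧ ‖y‖ = 1 ∧ ⟪x, y⟫ = ((q₀ : ℝ) : ℂ) ∧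
        r = ‖⟪(rankOne a b) x, y⟫‖} := ⟨x, v, hx, hv, hxy, hval.symm⟩
    exact le_antisymm (Real.sSup_le (ub q₀) hab.le)
      (le_csSup ⟨‖a‖ * ‖b‖, fun r hr => ub q₀ r hr⟩ hmem)
  · -- strict inequality elsewhere
    rintro q ⟨hq0, hq1⟩ hne
    set θ := Real.arccos q with hθ
    set φ := Real.arccos q₀ with hφ
    set M : ℝ := (1 + Real.cos (θ - φ)) / 2 with hM
    have hθφ : θ ≠ φ := by
      intro h
      apply hne
      have := congrArg Real.cos h
      rwa [hθ, hφ, Real.cos_arccos (by linarith) hq1,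
        Real.cos_arccos (by linarith) hq₀1] at this
    have hθ2 : θ ≤ Real.pi / 2 := Real.arccos_le_pi_div_two.2 hq0
    have hφ2 : φ ≤ Real.pi / 2 := Real.arccos_le_pi_div_two.2 hq₀0
    have hθn : 0 ≤ θ := Real.arccos_nonneg _
    have hφn : 0 ≤ φ := Real.arccos_nonneg _
    have habs : |θ - φ| ≤ Real.pi := by
      rw [abs_sub_le_iff]
      constructor <;> linarith [Real.pi_pos]
    have habs0 : 0 < |θ - φ| := abs_pos.2 (sub_ne_zero.2 hθφ)
    have hcos1 : Real.cos (θ - φ) < 1 := by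
      have := Real.cos_lt_cos_of_nonneg_of_le_pi (le_refl (0:ℝ)) habs habs0
      rwa [Real.cos_zero, Real.cos_abs] at this
    have hM1 : M < 1 := by rw [hM]; linarith
    have hMn : 0 ≤ M := by
      have := Real.neg_one_le_cos (θ - φ)
      rw [hM]; linarith
    have hbound : qRad q (rankOne a b) ≤ (‖a‖ * ‖b‖) * M := by
      apply Real.sSup_le _ (by positivity)
      rintro r ⟨x, y, hx, hy, hxy, rfl⟩
      rw [norm_inner_rankOne]
      have hxu : ‖⟪x, a⟫‖ = ‖a‖ * ‖⟪x, u⟫‖ := by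
        rw [hu_def, inner_smul_right, norm_mul, Complex.norm_real,
          Real.norm_eq_abs, abs_of_nonneg (inv_nonneg.2 hna.le)]
        field_simp
      have hvy : ‖⟪b, y⟫‖ = ‖b‖ * ‖⟪v, y⟫‖ := by
        rw [hv_def, inner_smul_left, Complex.conj_ofReal, norm_mul, Complex.norm_real,
          Real.norm_eq_abs, abs_of_nonneg (inv_nonneg.2 hnb.le)]
        field_simp
      have hk : ‖⟪x, u⟫‖ * ‖⟪v, y⟫‖ ≤ M := by
        have := key_bound hx hy hu hv hq0 hxy
        rwa [hnuv, ← hθ, ← hφ, ← hM] at this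
      calc ‖⟪x, a⟫‖ * ‖⟪b, y⟫‖ = (‖a‖ * ‖b‖) * (‖⟪x, u⟫‖ * ‖⟪v, y⟫‖) := by
            rw [hxu, hvy]; ring
        _ ≤ (‖a‖ * ‖b‖) * M := mul_le_mul_of_nonneg_left hk hab.le
    calc qRad q (rankOne a b) ≤ (‖a‖ * ‖b‖) * M := hbound
      _ < (‖a‖ * ‖b‖) * 1 := mul_lt_mul_of_pos_left hM1 hab
      _ = ‖a‖ * ‖b‖ := mul_one _
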